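/- Let 𝒦 ⊆ {−K,…,K} with |𝒦| ≥ 3. Let (x_1,v_1),…,(x_N,v_N) be independent Ω-valued random variables whose laws μ_1,…,μ_N are absolutely continuous with respect to the Lebesgue measure on ℝ^{2d}. Then, almost surely, the random configuration {(x_i,v_i)}_{i=1}^N admits no ghost particle with respect to 𝒦. -/

import Mathlib

open MeasureTheory Complex Real Set

noncomputable section

/-- Phase space: positions and velocities in `ℝ^d`. -/
abbrev PS (d : ℕ) := (Fin d → ℝ) × (Fin d → ℝ)

/-- The phase-space domain `Ω`. -/
def Omega (d K : ℕ) (τ : ℝ) : Set (PS d) :=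
  {p | ∀ k : ℤ, |k| ≤ (K : ℤ) → ∀ j, p.1 j + (k : ℝ) * τ * p.2 j ∈ Set.Icc (0 : ℝ) 1}

/-- The affine set `L_{i,k}` attached to a particle `p₀` and a time sample `k`. -/
def Lset (d K : ℕ) (τ : ℝ) (p₀ : PS d) (k : ℤ) : Set (PS d) :=
  {p ∈ Omega d K τ | ∀ j, (p.1 j - p₀.1 j) + (k : ℝ) * τ * (p.2 j - p₀.2 j) = 0}

/-- `g` is a ghost particle of the configuration `P` with respect to the
set of time samples `Ks`. -/
def IsGhost {d K N : ℕ} (τ : ℝ) (P : Fin N → PS d) (Ks : Finset ℤ) (g : PS d) : Prop :=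
  g ∈ Omega d K τ ∧ ∃ ι : ℤ → Fin N, Set.InjOn ι (Ks : Set ℤ) ∧
    (⋂ k ∈ Ks, Lset d K τ (P (ι k)) k) = {g}

/-- Integral of a complex function against a complex measure, via the Jordan
decompositions of the real and imaginary parts. -/
def cintegral {α : Type*} [MeasurableSpace α] (μ : ComplexMeasure α) (f : α → ℂ) : ℂ :=
  ((∫ x, f x ∂(ComplexMeasure.re μ).toJordanDecomposition.posPart)
      - ∫ x, f x ∂(ComplexMeasure.re μ).toJordanDecomposition.negPart)
    + Complex.I * ((∫ x, f x ∂(ComplexMeasure.im μ).toJordanDecomposition.posPart)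
      - ∫ x, f x ∂(ComplexMeasure.im μ).toJordanDecomposition.negPart)

/-- The total variation norm of a complex measure, defined by duality against
continuous functions bounded by one. -/
def tvNorm {α : Type*} [MeasurableSpace α] [TopologicalSpace α] (μ : ComplexMeasure α) : ℝ :=
  sSup {r | ∃ f : α → ℂ, Continuous f ∧ (∀ x, ‖f x‖ ≤ 1) ∧ r = ‖cintegral μ f‖}

/-- A complex measure is supported on a set `S` if it vanishes on measurable sets
disjoint from `S`. -/
def SupportedOn {α : Type*} [MeasurableSpace α] (μ : ComplexMeasure α) (S : Set α) : Prop :=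
  ∀ t : Set α, MeasurableSet t → Disjoint t S → μ t = 0

/-- The Dirac measure at a point, as a complex measure. -/
def cdirac {α : Type*} [MeasurableSpace α] (a : α) : ComplexMeasure α :=
  (MeasureTheory.Measure.dirac a).toSignedMeasure.toComplexMeasure 0

/-- The test function `p ↦ e^{-2πi l·(x + kτv)}`. -/
def testFn (d : ℕ) (τ : ℝ) (l : Fin d → ℤ) (k : ℤ) : PS d → ℂ :=
  fun p => Complex.exp (-(2 * (π : ℂ) * Complex.I) *
    ∑ j, (l j : ℂ) * ((p.1 j : ℂ) + (k : ℂ) * (τ : ℂ) * (p.2 j : ℂ)))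

/-- The measurement `(𝒢 μ)_{l,k}`. -/
def Gmeas {d : ℕ} (τ : ℝ) (μ : ComplexMeasure (PS d)) (l : Fin d → ℤ) (k : ℤ) : ℂ :=
  cintegral μ (testFn d τ l k)

/-- Two complex measures give the same measurements for all allowed frequencies
`‖l‖_∞ ≤ f_c` and time samples `|k| ≤ K`. -/
def SameMeas {d : ℕ} (K : ℕ) (τ : ℝ) (f_c : ℕ) (μ ν : ComplexMeasure (PS d)) : Prop :=
  ∀ l : Fin d → ℤ, (∀ j, |l j| ≤ (f_c : ℤ)) → ∀ k : ℤ, |k| ≤ (K : ℤ) →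
    Gmeas τ μ l k = Gmeas τ ν l k

/-- The set of allowed frequencies `l ∈ ℤ^d`, `‖l‖_∞ ≤ f_c`. -/
def freqSet (d : ℕ) (f_c : ℕ) : Finset (Fin d → ℤ) :=
  Fintype.piFinset fun _ => Finset.Icc (-(f_c : ℤ)) (f_c : ℤ)

/-- A function on phase space has dynamical form. -/
def DynamicalForm (d K : ℕ) (τ : ℝ) (f_c : ℕ) (q : PS d → ℂ) : Prop :=
  ∃ c : ℤ → (Fin d → ℤ) → ℂ, ∀ p : PS d,
    q p = ∑ k ∈ Finset.Icc (-(K : ℤ)) (K : ℤ), ∑ l ∈ freqSet d f_c,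
      c k l * Complex.exp ((2 * (π : ℂ) * Complex.I) *
        ∑ j, (l j : ℂ) * ((p.1 j : ℂ) + (k : ℂ) * (τ : ℂ) * (p.2 j : ℂ)))

/-- The canonical embedding of `𝕂` (either `ℝ` or `ℂ`) into `ℂ`. -/
def toC {𝕜 : Type*} [RCLike 𝕜] (a : 𝕜) : ℂ :=
  (RCLike.re a : ℝ) + (RCLike.im a : ℝ) * Complex.I



/-- Auxiliary: an affine hyperplane-type set in phase space has Lebesgue measure zero. -/
lemma hyp_zero' {d : ℕ} (j : Fin d) {a : ℝ} (ha : a ≠ 0) (b c : ℝ) :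
    (volume : Measure (PS d)) {p | a * p.1 j + b * p.2 j = c} = 0 := by
  have hf : Measurable (fun p : PS d => a * p.1 j + b * p.2 j) := by fun_prop
  have hmeas : MeasurableSet {p : PS d | a * p.1 j + b * p.2 j = c} :=
    hf (measurableSet_singleton c)
  rw [Measure.volume_eq_prod, Measure.prod_apply_symm hmeas]
  have hslice : ∀ v : Fin d → ℝ,
      ((fun x => (x, v)) ⁻¹' {p : PS d | a * p.1 j + b * p.2 j = c})
        = {x : Fin d → ℝ | x j = (c - b * v j) / a} := by
    intro v
    ext x
    simp only [Set.mem_preimage, Set.mem_setOf_eq]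
    rw [eq_div_iff ha]
    constructor <;> intro h <;> linarith
  simp only [hslice]
  have hz : ∀ v : Fin d → ℝ,
      (volume : Measure (Fin d → ℝ)) {x : Fin d → ℝ | x j = (c - b * v j) / a} = 0 := by
    intro v
    rw [volume_pi]
    exact Measure.pi_hyperplane _ j _
  simp [hz]

/-- Auxiliary: the probability that three independent absolutely continuous particles
satisfy the ghost consistency relation is zero. -/
lemma key_zero' {d N : ℕ} (j0 : Fin d) (τ : ℝ)
    {Θ : Type*} [MeasurableSpace Θ] (ℙ : Measure Θ) [IsProbabilityMeasure ℙ]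
    (X : Fin N → Θ → PS d) (hXmeas : ∀ i, Measurable (X i))
    (hindep : ProbabilityTheory.iIndepFun X ℙ)
    (hac : ∀ i, Measure.map (X i) ℙ ≪ (volume : Measure (PS d)))
    (i1 i2 i3 : Fin N) (k1 k2 k3 : ℤ) (h13 : i1 ≠ i3) (h23 : i2 ≠ i3) (h12 : k1 ≠ k2) :
    ℙ {θ | ((k3-k2 : ℤ) : ℝ) * ((X i1 θ).1 j0 + (k1 : ℝ) * τ * (X i1 θ).2 j0)
        + ((k1-k3 : ℤ) : ℝ) * ((X i2 θ).1 j0 + (k2 : ℝ) * τ * (X i2 θ).2 j0)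
        + ((k2-k1 : ℤ) : ℝ) * ((X i3 θ).1 j0 + (k3 : ℝ) * τ * (X i3 θ).2 j0) = 0} = 0 := by
  have hc3 : ((k2 - k1 : ℤ) : ℝ) ≠ 0 := by
    exact_mod_cast sub_ne_zero.2 (Ne.symm h12)
  set F : (PS d × PS d) × PS d → ℝ := fun q =>
    ((k3-k2 : ℤ) : ℝ) * (q.1.1.1 j0 + (k1 : ℝ) * τ * q.1.1.2 j0)
      + ((k1-k3 : ℤ) : ℝ) * (q.1.2.1 j0 + (k2 : ℝ) * τ * q.1.2.2 j0)
      + ((k2-k1 : ℤ) : ℝ) * (q.2.1 j0 + (k3 : ℝ) * τ * q.2.2 j0) with hFdef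
  have hF : Measurable F := by fun_prop
  have hS : MeasurableSet (F ⁻¹' {0}) := hF (measurableSet_singleton 0)
  set Y : Θ → PS d × PS d := fun θ => (X i1 θ, X i2 θ) with hYdef
  have hY : Measurable Y := (hXmeas i1).prodMk (hXmeas i2)
  have hIndep2 : ProbabilityTheory.IndepFun Y (X i3) ℙ :=
    hindep.indepFun_prodMk hXmeas i1 i2 i3 h13 h23
  have hmapeq : ℙ.map (fun θ => (Y θ, X i3 θ)) = (ℙ.map Y).prod (ℙ.map (X i3)) :=
    (ProbabilityTheory.indepFun_iff_map_prod_eq_prod_map_map hY.aemeasurable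
      (hXmeas i3).aemeasurable).1 hIndep2
  have hev : {θ | ((k3-k2 : ℤ) : ℝ) * ((X i1 θ).1 j0 + (k1 : ℝ) * τ * (X i1 θ).2 j0)
        + ((k1-k3 : ℤ) : ℝ) * ((X i2 θ).1 j0 + (k2 : ℝ) * τ * (X i2 θ).2 j0)
        + ((k2-k1 : ℤ) : ℝ) * ((X i3 θ).1 j0 + (k3 : ℝ) * τ * (X i3 θ).2 j0) = 0}
      = (fun θ => (Y θ, X i3 θ)) ⁻¹' (F ⁻¹' {0}) := rfl
  rw [hev, ← Measure.map_apply (hY.prodMk (hXmeas i3)) hS, hmapeq,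
    Measure.prod_apply hS]
  have hinner : ∀ y : PS d × PS d, (ℙ.map (X i3)) (Prod.mk y ⁻¹' (F ⁻¹' {0})) = 0 := by
    intro y
    have hset : Prod.mk y ⁻¹' (F ⁻¹' {0})
        = {r : PS d | ((k2-k1 : ℤ) : ℝ) * r.1 j0
            + (((k2-k1 : ℤ) : ℝ) * ((k3 : ℝ) * τ)) * r.2 j0
          = -(((k3-k2 : ℤ) : ℝ) * (y.1.1 j0 + (k1 : ℝ) * τ * y.1.2 j0)
            + ((k1-k3 : ℤ) : ℝ) * (y.2.1 j0 + (k2 : ℝ) * τ * y.2.2 j0))} := by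
      ext r
      simp only [Set.mem_preimage, Set.mem_singleton_iff, Set.mem_setOf_eq, hFdef]
      constructor <;> intro h <;> linear_combination h
    rw [hset]
    exact hac i3 (hyp_zero' j0 hc3 _ _)
  simp [hinner]

/-- If the particles are independent random variables with laws absolutely
continuous with respect to Lebesgue measure and supported in `Ω`, then almost surely the
random configuration admits no ghost particle with respect to `𝒦` (with `|𝒦| ≥ 3`). -/
theorem no_ghost_particles_almost_surely
    {d K N : ℕ} (hd : 1 ≤ d) (τ : ℝ) (hτ : 0 < τ)
    (Ks : Finset ℤ) (hKs : Ks ⊆ Finset.Icc (-(K : ℤ)) (K : ℤ)) (hcard : 3 ≤ Ks.card)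
    {Θ : Type*} [MeasurableSpace Θ] (ℙ : MeasureTheory.Measure Θ) [IsProbabilityMeasure ℙ]
    (X : Fin N → Θ → PS d)
    (hXmeas : ∀ i, Measurable (X i))
    (hindep : ProbabilityTheory.iIndepFun X ℙ)
    (hac : ∀ i, MeasureTheory.Measure.map (X i) ℙ ≪ (volume : Measure (PS d)))
    (hsupp : ∀ i, MeasureTheory.Measure.map (X i) ℙ (Omega d K τ)ᶜ = 0) :
    ∀ᵐ θ ∂ℙ, ∀ g : PS d, ¬ IsGhost (K := K) τ (fun i => X i θ) Ks g := by
  classical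
  have hd0 : (0 : ℕ) < d := hd
  set j0 : Fin d := ⟨0, hd0⟩ with hj0
  have hGood : ∀ᵐ θ ∂ℙ, ∀ (i1 i2 i3 : Fin N) (k1 k2 k3 : ℤ), i1 ≠ i3 → i2 ≠ i3 → k1 ≠ k2 →
      ((k3-k2 : ℤ) : ℝ) * ((X i1 θ).1 j0 + (k1 : ℝ) * τ * (X i1 θ).2 j0)
        + ((k1-k3 : ℤ) : ℝ) * ((X i2 θ).1 j0 + (k2 : ℝ) * τ * (X i2 θ).2 j0)
        + ((k2-k1 : ℤ) : ℝ) * ((X i3 θ).1 j0 + (k3 : ℝ) * τ * (X i3 θ).2 j0) ≠ 0 := by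
    refine ae_all_iff.2 fun i1 => ae_all_iff.2 fun i2 => ae_all_iff.2 fun i3 =>
      ae_all_iff.2 fun k1 => ae_all_iff.2 fun k2 => ae_all_iff.2 fun k3 => ?_
    by_cases hcond : i1 ≠ i3 ∧ i2 ≠ i3 ∧ k1 ≠ k2
    · obtain ⟨h13, h23, h12⟩ := hcond
      have hz := key_zero' j0 τ ℙ X hXmeas hindep hac i1 i2 i3 k1 k2 k3 h13 h23 h12
      rw [ae_iff]
      refine measure_mono_null ?_ hz
      intro θ hθ
      simp only [Set.mem_setOf_eq] at hθ ⊢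
      push_neg at hθ
      exact hθ.2.2.2
    · exact ae_of_all _ fun θ h13 h23 h12 => (hcond ⟨h13, h23, h12⟩).elim
  filter_upwards [hGood] with θ hθ
  intro g hG
  obtain ⟨hgΩ, ι, hinj, hInt⟩ := hG
  have hgmem : g ∈ ⋂ k ∈ Ks, Lset d K τ ((fun i => X i θ) (ι k)) k := by
    rw [hInt]; exact rfl
  obtain ⟨k1, hk1, k2, hk2, h12⟩ := Finset.one_lt_card.1 (by omega : 1 < Ks.card)
  have hKe : ((Ks.erase k1).erase k2).Nonempty := by
    rw [← Finset.card_pos, Finset.card_erase_of_mem (Finset.mem_erase.2 ⟨Ne.symm h12, hk2⟩),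
      Finset.card_erase_of_mem hk1]
    omega
  obtain ⟨k3, hk3'⟩ := hKe
  have hk3 : k3 ∈ Ks := Finset.mem_of_mem_erase (Finset.mem_of_mem_erase hk3')
  have h32 : k3 ≠ k2 := (Finset.mem_erase.1 hk3').1
  have h31 : k3 ≠ k1 := (Finset.mem_erase.1 (Finset.mem_of_mem_erase hk3')).1
  have hL : ∀ k ∈ Ks, ∀ j, (g.1 j - (X (ι k) θ).1 j) + (k : ℝ) * τ * (g.2 j - (X (ι k) θ).2 j)
      = 0 := by
    intro k hk j
    have := Set.mem_iInter₂.1 hgmem k hk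
    exact this.2 j
  have h1 := hL k1 hk1 j0
  have h2 := hL k2 hk2 j0
  have h3 := hL k3 hk3 j0
  have hne13 : ι k1 ≠ ι k3 := fun h =>
    h31 (hinj (Finset.mem_coe.2 hk1) (Finset.mem_coe.2 hk3) h).symm
  have hne23 : ι k2 ≠ ι k3 := fun h =>
    h32 (hinj (Finset.mem_coe.2 hk2) (Finset.mem_coe.2 hk3) h).symm
  refine hθ (ι k1) (ι k2) (ι k3) k1 k2 k3 hne13 hne23 h12 ?_
  push_cast
  linear_combination (((k2 : ℝ) - (k3 : ℝ)) * h1) + (((k3 : ℝ) - (k1 : ℝ)) * h2)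
    + (((k1 : ℝ) - (k2 : ℝ)) * h3)


end
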